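/- With V ⊆ ℝⁿ open and convex, define F^k : K_k → X_k by (F^k ω)(v,q₁,…,q_k,w) = (ω(v,w))(q₁−v, …, q_k−v), where K_k = C^∞(V×V, Λ^k(ℝⁿ)*) is the Koszul complex and X_k = C^∞(V×V^k×V) the bar complex. Then F is a chain map: F^k ∘ ∂_K^{k+1} = ∂_X^{k+1} ∘ F^{k+1} for all k ≥ 0, where ∂_K and ∂_X are the Koszul and bar boundaries respectively. -/

import Mathlib

open Finset

namespace FChainMap

variable {n : ℕ}

abbrev E (n : ℕ) := EuclideanSpace ℝ (Fin n)

/-- Elements of the bar module `X_k = C^∞(V × V^k × V)` (as functions of `(v,q,w)`). -/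
def X (n k : ℕ) := E n → (Fin k → E n) → E n → ℂ

/-- Elements of the Koszul module `K_k = C^∞(V×V, Λ^k(ℝⁿ)*)`. -/
def K (n k : ℕ) := E n × E n → (E n) [⋀^Fin k]→ₗ[ℝ] ℂ

/-- The bar boundary `∂_X^{k+1} : X_{k+1} → X_k`. -/
noncomputable def barD (k : ℕ) (χ : X n (k + 1)) : X n k := fun v q w =>
  χ v (Fin.cons v q) w
    + ∑ i : Fin k, (-1 : ℂ) ^ ((i : ℕ) + 1) * χ v (Fin.insertNth i.castSucc (q i) q) w
    + (-1 : ℂ) ^ (k + 1) * χ v (Fin.snoc q w) w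

/-- The Koszul boundary `∂_K^{k+1} : K_{k+1} → K_k`, insertion of `v - w` in the first slot. -/
noncomputable def kosD (k : ℕ) (ω : K n (k + 1)) : K n k := fun p => (ω p).curryLeft (p.1 - p.2)

/-- The chain map `F^k : K_k → X_k`, `(F^k ω)(v,q₁,…,q_k,w) = (ω(v,w))(q₁-v, …, q_k-v)`. -/
noncomputable def F (k : ℕ) (ω : K n k) : X n k := fun v q w => ω (v, w) (fun m => q m - v)

/-- `F` is a chain map from the Koszul complex to the bar complex:
`F^k ∘ ∂_K^{k+1} = ∂_X^{k+1} ∘ F^{k+1}` (pointwise, in particular at all points of `V`,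
`V ⊆ ℝⁿ` open and convex). -/
theorem F_is_chain_map
    (V : Set (E n)) (hV : IsOpen V) (hconv : Convex ℝ V) :
    ∀ (k : ℕ) (ω : K n (k + 1)) (v : E n) (q : Fin k → E n) (w : E n),
      v ∈ V → (∀ m, q m ∈ V) → w ∈ V →
        F k (kosD k ω) v q w = barD k (F (k + 1) ω) v q w := by
  intro k ω v q w _ _ _
  set g : Fin k → E n := fun m => q m - v with hg
  have h1 : (fun m => (Fin.cons v q : Fin (k+1) → E n) m - v) = Fin.cons (0 : E n) g := by
    funext m
    cases m using Fin.cases <;> simp [g]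
  have hzero1 : ω (v, w) (Fin.cons (0 : E n) g) = 0 :=
    (ω (v, w)).map_coord_zero 0 (by simp)
  have hins : ∀ i : Fin k,
      (fun m => (Fin.insertNth i.castSucc (q i) q : Fin (k+1) → E n) m - v)
        = Fin.insertNth i.castSucc (g i) g := by
    intro i
    funext m
    refine Fin.succAboveCases i.castSucc ?_ (fun j => ?_) m <;> simp [g]
  have hzero2 : ∀ i : Fin k, ω (v, w) (Fin.insertNth i.castSucc (g i) g) = 0 := by
    intro i
    refine (ω (v, w)).map_eq_zero_of_eq _ (i := i.castSucc) (j := i.succ) ?_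
      (Fin.castSucc_lt_succ : i.castSucc < i.succ).ne
    have h2 : i.succ = i.castSucc.succAbove i := by
      rw [Fin.succAbove_of_le_castSucc _ _ le_rfl]
    rw [Fin.insertNth_apply_same, h2, Fin.insertNth_apply_succAbove]
  have h3 : (fun m => (Fin.snoc q w : Fin (k+1) → E n) m - v) = Fin.snoc g (w - v) := by
    funext m
    cases m using Fin.lastCases <;> simp [g]
  have h4 : Fin.snoc g (w - v) = Fin.cons (w - v) g ∘ finRotate (k + 1) := by
    funext m
    cases m using Fin.lastCases with
    | last => simp [finRotate_succ_apply]
    | cast i => simp [finRotate_succ_apply, Fin.coeSucc_eq_succ]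
  have h5 : ω (v, w) (Fin.snoc g (w - v))
      = ((-1 : ℤˣ) ^ k) • ω (v, w) (Fin.cons (w - v) g) := by
    rw [h4, (ω (v, w)).map_perm, sign_finRotate, Nat.add_sub_cancel]
  have h6 : ω (v, w) (Fin.cons (v - w) g) = - ω (v, w) (Fin.cons (w - v) g) := by
    have hvw : (v - w) = (-1 : ℝ) • (w - v) := by simp [neg_sub]
    rw [hvw]
    show (ω (v, w)).toMultilinearMap (Fin.cons ((-1 : ℝ) • (w - v)) g) = _
    rw [MultilinearMap.cons_smul (ω (v, w)).toMultilinearMap g]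
    simp
  simp only [F, kosD, barD]
  have hL : ((((ω (v, w)).curryLeft (v - w))) fun m => q m - v)
      = ω (v, w) (Fin.cons (v - w) g) := rfl
  rw [hL, h1, h3]
  rw [hzero1, Finset.sum_congr rfl (fun i _ => by rw [hins i, hzero2 i, mul_zero]),
    Finset.sum_const_zero, h5]
  have hpow : ((-1 : ℂ)) ^ (k + 1) * ((-1 : ℂ)) ^ k = -1 := by
    rw [← pow_add]
    exact Odd.neg_one_pow ⟨k, by ring⟩
  have : (((-1 : ℤˣ) ^ k) • ω (v, w) (Fin.cons (w - v) g))
      = ((-1 : ℂ)) ^ k * ω (v, w) (Fin.cons (w - v) g) := by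
    rcases Int.units_eq_one_or ((-1 : ℤˣ) ^ k) with h | h <;>
      rcases Nat.even_or_odd k with hk | hk <;>
      simp_all [Units.smul_def, zsmul_eq_mul, hk.neg_one_pow]
  rw [this]
  rw [← mul_assoc, hpow, h6]
  simp


end FChainMap
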